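/- Let ℓ be a prime and k ≥ 2 an integer, and set r = gcd(k−1, ℓ−1). Then for every positive integer n, ℓ divides σ_{k−1}(n) if and only if ℓ divides σ_r(n). -/

import Mathlib

/-- `mySigma m n = ∑_{d ∣ n} d^m`, the sum of `m`-th powers of the divisors of `n`. -/
def mySigma (m n : ℕ) : ℕ := ∑ d ∈ n.divisors, d ^ m

open Finset

lemma char (ℓ : ℕ) [Fact ℓ.Prime] (v : (ZMod ℓ)ˣ) (N : ℕ) :
    (∑ i ∈ range N, (v : ZMod ℓ) ^ i) = 0 ↔
      (orderOf v = 1 ∧ (N : ZMod ℓ) = 0) ∨ (orderOf v ≠ 1 ∧ orderOf v ∣ N) := by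
  by_cases h : (v : ZMod ℓ) = 1
  · have hv : v = 1 := Units.ext (by simpa using h)
    simp [h, hv]
  · have hv1 : orderOf v ≠ 1 := by
      intro h1
      exact h (by rw [orderOf_eq_one_iff.mp h1]; simp)
    have hsub : (v : ZMod ℓ) - 1 ≠ 0 := sub_ne_zero.mpr h
    have key : (∑ i ∈ range N, (v : ZMod ℓ) ^ i) = 0 ↔ (v : ZMod ℓ) ^ N = 1 := by
      constructor
      · intro hs
        have h2 := geom_sum_mul (v : ZMod ℓ) N
        rw [hs, zero_mul] at h2
        linear_combination -h2
      · intro hs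
        have h2 := geom_sum_mul (v : ZMod ℓ) N
        rw [hs, sub_self] at h2
        rcases mul_eq_zero.mp h2 with h3 | h3
        · exact h3
        · exact absurd h3 hsub
    rw [key]
    have : (v : ZMod ℓ) ^ N = 1 ↔ v ^ N = 1 := by
      rw [Units.ext_iff]; push_cast; rfl
    rw [this, ← orderOf_dvd_iff_pow_eq_one]
    simp [hv1]

lemma mySigma_prime_pow_cast (ℓ m p a : ℕ) (hp : p.Prime) :
    ((mySigma m (p ^ a) : ℕ) : ZMod ℓ) = ∑ i ∈ range (a + 1), ((p : ZMod ℓ) ^ m) ^ i := by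
  rw [mySigma, Nat.sum_divisors_prime_pow hp]
  push_cast
  exact Finset.sum_congr rfl fun i _ => by rw [← pow_mul, ← pow_mul, mul_comm]

-- divisibility characterization for prime powers with p ≠ ℓ
lemma dvd_mySigma_prime_pow (ℓ : ℕ) (hℓ : ℓ.Prime) (m p a : ℕ) (hp : p.Prime) (hne : p ≠ ℓ) :
    haveI := Fact.mk hℓ
    ℓ ∣ mySigma m (p ^ a) ↔
      (orderOf ((ZMod.unitOfCoprime p ((Nat.coprime_primes hp hℓ).mpr hne)) ^ m) = 1
          ∧ ((a + 1 : ℕ) : ZMod ℓ) = 0)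
        ∨ (orderOf ((ZMod.unitOfCoprime p ((Nat.coprime_primes hp hℓ).mpr hne)) ^ m) ≠ 1
          ∧ orderOf ((ZMod.unitOfCoprime p ((Nat.coprime_primes hp hℓ).mpr hne)) ^ m) ∣ a + 1) := by
  haveI := Fact.mk hℓ
  set u : (ZMod ℓ)ˣ := ZMod.unitOfCoprime p ((Nat.coprime_primes hp hℓ).mpr hne) with hu
  rw [← ZMod.natCast_eq_zero_iff (mySigma m (p ^ a)) ℓ,
    mySigma_prime_pow_cast ℓ m p a hp]
  have hcoe : (p : ZMod ℓ) = (u : ZMod ℓ) := (ZMod.coe_unitOfCoprime _ _).symm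
  rw [hcoe]
  have : ((u : ZMod ℓ) ^ m) = ((u ^ m : (ZMod ℓ)ˣ) : ZMod ℓ) := by push_cast; rfl
  rw [this, char ℓ (u ^ m) (a + 1)]

lemma core (ℓ : ℕ) (hℓ : ℓ.Prime) (m₁ m₂ : ℕ) (hm₁ : 0 < m₁) (hm₂ : 0 < m₂)
    (hgcd : ∀ t, t ∣ ℓ - 1 → Nat.gcd t m₁ = Nat.gcd t m₂)
    (p a : ℕ) (hp : p.Prime) :
    (ℓ ∣ mySigma m₁ (p ^ a) ↔ ℓ ∣ mySigma m₂ (p ^ a)) := by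
  haveI := Fact.mk hℓ
  by_cases hne : p = ℓ
  · -- p = ℓ : both sums ≡ 1 mod ℓ, never divisible
    subst hne
    have key : ∀ m : ℕ, 0 < m → ¬ (p ∣ mySigma m (p ^ a)) := by
      intro m hm hdvd
      rw [← ZMod.natCast_eq_zero_iff, mySigma_prime_pow_cast p m p a hp] at hdvd
      rw [ZMod.natCast_self, zero_pow hm.ne'] at hdvd
      have : (∑ i ∈ range (a + 1), (0 : ZMod p) ^ i) = 1 := by
        rw [Finset.sum_eq_single 0]
        · simp
        · intro b _ hb; exact zero_pow hb
        · intro h; simp at h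
      rw [this] at hdvd
      exact one_ne_zero hdvd
    exact ⟨fun h => absurd h (key m₁ hm₁), fun h => absurd h (key m₂ hm₂)⟩
  · rw [dvd_mySigma_prime_pow ℓ hℓ m₁ p a hp hne, dvd_mySigma_prime_pow ℓ hℓ m₂ p a hp hne]
    set u : (ZMod ℓ)ˣ := ZMod.unitOfCoprime p ((Nat.coprime_primes hp hℓ).mpr hne)
    have hcard : Fintype.card (ZMod ℓ)ˣ = ℓ - 1 := ZMod.card_units ℓ
    have ht : orderOf u ∣ ℓ - 1 := hcard ▸ orderOf_dvd_card
    have horder : orderOf (u ^ m₁) = orderOf (u ^ m₂) := by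
      rw [orderOf_pow, orderOf_pow, hgcd (orderOf u) ht]
    rw [horder]

lemma dvd_mySigma_iff_exists (ℓ : ℕ) (hℓ : ℓ.Prime) (m n : ℕ) (hn : n ≠ 0) :
    ℓ ∣ mySigma m n ↔ ∃ p ∈ n.primeFactors, ℓ ∣ mySigma m (p ^ n.factorization p) := by
  have hsig : ∀ j : ℕ, mySigma m j = ArithmeticFunction.sigma m j := fun j => by
    rw [ArithmeticFunction.sigma_apply, mySigma]
  rw [hsig, ArithmeticFunction.isMultiplicative_sigma.multiplicative_factorization _ hn,
    Finsupp.prod, Prime.dvd_finset_prod_iff hℓ.prime]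
  simp only [Nat.support_factorization, ← hsig]

theorem stmt8 (ℓ k : ℕ) (hℓ : ℓ.Prime) (hk : 2 ≤ k)
    (r : ℕ) (hr : r = Nat.gcd (k - 1) (ℓ - 1)) :
    ∀ n : ℕ, 0 < n → (ℓ ∣ mySigma (k - 1) n ↔ ℓ ∣ mySigma r n) := by
  intro n hn
  have hk1 : 0 < k - 1 := by omega
  have hr0 : 0 < r := by
    rw [hr]; exact Nat.gcd_pos_of_pos_left _ hk1
  have hgcd : ∀ t, t ∣ ℓ - 1 → Nat.gcd t (k - 1) = Nat.gcd t r := by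
    intro t htdvd
    rw [hr, ← Nat.gcd_assoc, Nat.gcd_eq_left ((Nat.gcd_dvd_left t (k - 1)).trans htdvd)]
  rw [dvd_mySigma_iff_exists ℓ hℓ _ n hn.ne', dvd_mySigma_iff_exists ℓ hℓ _ n hn.ne']
  refine exists_congr fun p => ?_
  by_cases hp : p ∈ n.primeFactors
  · simp only [hp, true_and]
    exact core ℓ hℓ _ _ hk1 hr0 hgcd p _ (Nat.prime_of_mem_primeFactors hp)
  · simp [hp]
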